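/- Every half set of the normalized D₄ root system is a spherical {10,4,2}-design with 12 points on S³: if X′ ⊆ (1/√2)(D₄)₂ is such that for every x ∈ (1/√2)(D₄)₂ exactly one of x and −x belongs to X′, then |X′| = 12 and ∑_{x∈X′} P(x) = 0 for every harmonic polynomial P of degree ℓ for each ℓ ∈ {10, 4, 2}. -/

import Mathlib

open MvPolynomial

/-- A polynomial `P ∈ ℝ[x₁,…,x_d]` is *harmonic of degree `ℓ`* if it is homogeneous of
degree `ℓ` and is annihilated by the Laplacian `∑ⱼ ∂²/∂xⱼ²`. -/
def IsHarmonic {d : ℕ} (ℓ : ℕ) (P : MvPolynomial (Fin d) ℝ) : Prop :=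
  P.IsHomogeneous ℓ ∧ ∑ j : Fin d, pderiv j (pderiv j P) = 0

/-- The shell `{x ∈ ℤ^d : x₁² + ⋯ + x_d² = n}` as a `Finset`.  (The bounding box
`Finset.Icc` is harmless: any integer solution satisfies `|x i| ≤ x i ^ 2 ≤ n`.) -/
noncomputable def intShell (d n : ℕ) : Finset (Fin d → ℤ) :=
  (Finset.Icc (fun _ => -(n : ℤ)) (fun _ => (n : ℤ))).filter
    (fun x => ∑ i, x i ^ 2 = (n : ℤ))

/-- The normalized `D₄` root system `(1/√2)·(D₄)₂ ⊆ S³` (for `n = 2`), where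
`(D₄)₂ = {x ∈ ℤ⁴ : x₁²+⋯+x₄² = 2}`. -/
def normShell (d n : ℕ) : Set (EuclideanSpace ℝ (Fin d)) :=
  {x | ∃ y ∈ intShell d n, ∀ i, x i = (y i : ℝ) / Real.sqrt n}

namespace D4Design

/-- The 24 roots of `D₄`, listed explicitly. -/
def L24 : List (Fin 4 → ℤ) :=
  [![1,1,0,0], ![1,-1,0,0], ![-1,1,0,0], ![-1,-1,0,0], ![1,0,1,0], ![1,0,-1,0], ![-1,0,1,0],
   ![-1,0,-1,0], ![1,0,0,1], ![1,0,0,-1], ![-1,0,0,1], ![-1,0,0,-1], ![0,1,1,0], ![0,1,-1,0],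
   ![0,-1,1,0], ![0,-1,-1,0], ![0,1,0,1], ![0,1,0,-1], ![0,-1,0,1], ![0,-1,0,-1], ![0,0,1,1],
   ![0,0,1,-1], ![0,0,-1,1], ![0,0,-1,-1]]

set_option maxHeartbeats 1000000 in
theorem intShell_eq : intShell 4 2 = L24.toFinset := by decide

theorem L24_nodup : L24.Nodup := by decide

/-- List-based moments of the `D₄` root system. -/
def mL (a : Fin 4 → ℕ) : ℤ := (L24.map (fun y => ∏ i, y i ^ a i)).sum

/-- Finset-based moments of the `D₄` root system. -/
noncomputable def mZ (a : Fin 4 → ℕ) : ℤ := ∑ y ∈ intShell 4 2, ∏ i, y i ^ a i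

theorem mZ_eq (a : Fin 4 → ℕ) : mZ a = mL a := by
  rw [mZ, intShell_eq, mL]
  exact List.sum_toFinset _ L24_nodup

/-- Scaled multiplier values (the polynomial `T` with `∑_y ⟨x,y⟩^ℓ = |x|² T(x)`, in
coefficient form, scaled by 225). -/
def wA (g : Fin 4 → ℕ) : ℤ :=
  if ∑ i, g i = 0 then 1350
  else if ∑ i, g i = 1 then 225
  else if ∑ i, g i = 4 then
    (match (g 0 + 1) * (g 1 + 1) * (g 2 + 1) * (g 3 + 1) with
     | 5 => 30 | 8 => 15 | 9 => 24 | 12 => -2 | 16 => 1 | _ => 0)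
  else 0

def uZ (b : Fin 4 → ℕ) : ℤ :=
  if ∀ i, b i % 2 = 0 then wA (fun i => b i / 2) else 0

def sub2 (j : Fin 4) (a : Fin 4 → ℕ) : Fin 4 → ℕ := fun i => a i - (if j = i then 2 else 0)

set_option maxHeartbeats 4000000 in
set_option maxRecDepth 100000 in
theorem key10 : ∀ a ∈ Finset.Nat.antidiagonalTuple 4 10,
    225 * mL a = ∑ j : Fin 4, ((a j : ℤ) * ((a j : ℤ) - 1)) * uZ (sub2 j a) := by decide

set_option maxHeartbeats 4000000 in
set_option maxRecDepth 100000 in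
theorem key4 : ∀ a ∈ Finset.Nat.antidiagonalTuple 4 4,
    225 * mL a = ∑ j : Fin 4, ((a j : ℤ) * ((a j : ℤ) - 1)) * uZ (sub2 j a) := by decide

set_option maxHeartbeats 4000000 in
set_option maxRecDepth 100000 in
theorem key2 : ∀ a ∈ Finset.Nat.antidiagonalTuple 4 2,
    225 * mL a = ∑ j : Fin 4, ((a j : ℤ) * ((a j : ℤ) - 1)) * uZ (sub2 j a) := by decide

/-- The real-valued multiplier. -/
noncomputable def u (β : Fin 4 →₀ ℕ) : ℝ := (uZ ⇑β : ℝ) / 225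

/-- The linear functional `Q ↦ ∑_α g(α)·coeff α Q`. -/
noncomputable def S (g : (Fin 4 →₀ ℕ) → ℝ) (Q : MvPolynomial (Fin 4) ℝ) : ℝ :=
  ∑ α ∈ Q.support, g α * coeff α Q

theorem S_zero (g : (Fin 4 →₀ ℕ) → ℝ) : S g 0 = 0 := by simp [S]

theorem S_subset (g : (Fin 4 →₀ ℕ) → ℝ) {Q : MvPolynomial (Fin 4) ℝ} {T : Finset (Fin 4 →₀ ℕ)}
    (h : Q.support ⊆ T) : S g Q = ∑ α ∈ T, g α * coeff α Q :=
  Finset.sum_subset h (fun α _ hα => by rw [notMem_support_iff.mp hα, mul_zero])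

theorem S_add (g : (Fin 4 →₀ ℕ) → ℝ) (p q : MvPolynomial (Fin 4) ℝ) :
    S g (p + q) = S g p + S g q := by
  rw [S_subset g (MvPolynomial.support_add (p := p) (q := q)),
    S_subset g (Finset.subset_union_left (s₁ := p.support) (s₂ := q.support)),
    S_subset g (Finset.subset_union_right (s₁ := p.support) (s₂ := q.support)),
    ← Finset.sum_add_distrib]
  exact Finset.sum_congr rfl fun α _ => by rw [coeff_add]; ring

theorem S_sum (g : (Fin 4 →₀ ℕ) → ℝ) {ι : Type*} (s : Finset ι)
    (f : ι → MvPolynomial (Fin 4) ℝ) : S g (∑ j ∈ s, f j) = ∑ j ∈ s, S g (f j) := by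
  classical
  induction s using Finset.induction_on with
  | empty => simp [S_zero]
  | insert _ _ h ih => rw [Finset.sum_insert h, Finset.sum_insert h, S_add, ih]

theorem S_monomial (g : (Fin 4 →₀ ℕ) → ℝ) (s : Fin 4 →₀ ℕ) (a : ℝ) :
    S g (monomial s a) = g s * a := by
  by_cases h : a = 0
  · simp [S, h]
  · rw [S, support_monomial, if_neg h, Finset.sum_singleton, coeff_monomial, if_pos rfl]

theorem S_pderiv (g : (Fin 4 →₀ ℕ) → ℝ) (j : Fin 4) (Q : MvPolynomial (Fin 4) ℝ) :
    S g (pderiv j Q) = S (fun α => (α j : ℝ) * g (α - Finsupp.single j 1)) Q := by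
  induction Q using MvPolynomial.induction_on' with
  | add p q hp hq => rw [map_add, S_add, S_add, hp, hq]
  | monomial s a =>
      rw [pderiv_monomial, S_monomial, S_monomial]
      ring

theorem mem_support_deg {ℓ : ℕ} {P : MvPolynomial (Fin 4) ℝ} (hP : P.IsHomogeneous ℓ)
    {d : Fin 4 →₀ ℕ} (hd : d ∈ P.support) : ∑ i : Fin 4, d i = ℓ := by
  have h := hP (mem_support_iff.mp hd)
  rw [← h, show (Finsupp.weight 1 : (Fin 4 →₀ ℕ) →+ ℕ) = Finsupp.weight (fun _ => 1) from rfl,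
    ← Finsupp.degree_eq_weight_one, Finsupp.degree_apply]
  exact (Finset.sum_subset (Finset.subset_univ _)
    (fun i _ hi => Finsupp.notMem_support_iff.mp hi)).symm

theorem core {ℓ : ℕ} (hl : ℓ = 10 ∨ ℓ = 4 ∨ ℓ = 2) (P : MvPolynomial (Fin 4) ℝ)
    (hP : P.IsHomogeneous ℓ) (hΔ : ∑ j : Fin 4, pderiv j (pderiv j P) = 0) :
    ∑ d ∈ P.support, coeff d P * (mZ ⇑d : ℝ) = 0 := by
  have hm : ∀ d ∈ P.support, (225 : ℝ) * (mZ ⇑d : ℝ)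
      = ∑ j : Fin 4, (d j : ℝ) * ((d j : ℝ) - 1) * (uZ (sub2 j ⇑d) : ℝ) := by
    intro d hd
    have hmem : ⇑d ∈ Finset.Nat.antidiagonalTuple 4 ℓ :=
      Finset.Nat.mem_antidiagonalTuple.mpr (mem_support_deg hP hd)
    have key : 225 * mL ⇑d = ∑ j : Fin 4, ((d j : ℤ) * ((d j : ℤ) - 1)) * uZ (sub2 j ⇑d) := by
      rcases hl with h | h | h <;> subst h
      · exact key10 _ hmem
      · exact key4 _ hmem
      · exact key2 _ hmem
    rw [mZ_eq]
    exact_mod_cast congrArg (Int.cast : ℤ → ℝ) key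
  have h0 : ∑ j : Fin 4, S u (pderiv j (pderiv j P)) = 0 := by
    rw [← S_sum, hΔ, S_zero]
  have hcast : ∀ n : ℕ, (n : ℝ) * ((n - 1 : ℕ) : ℝ) = (n : ℝ) * ((n : ℝ) - 1) := by
    intro n
    cases n with
    | zero => simp
    | succ k => push_cast; ring
  have h3 : ∑ j : Fin 4, S u (pderiv j (pderiv j P))
      = ∑ d ∈ P.support, coeff d P * (mZ ⇑d : ℝ) := by
    have e1 : ∀ j : Fin 4, S u (pderiv j (pderiv j P))
        = ∑ α ∈ P.support, ((α j : ℝ) * ((α j - 1 : ℕ) : ℝ)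
            * u (α - Finsupp.single j 2)) * coeff α P := by
      intro j
      rw [S_pderiv, S_pderiv]
      simp only [S]
      refine Finset.sum_congr rfl fun α _ => ?_
      have h1 : (α - Finsupp.single j 1 : Fin 4 →₀ ℕ) j = α j - 1 := by
        rw [Finsupp.tsub_apply, Finsupp.single_eq_same]
      have h2 : α - Finsupp.single j 1 - Finsupp.single j 1 = α - Finsupp.single j 2 := by
        rw [tsub_tsub]
        congr 1
        rw [← Finsupp.single_add]
      rw [h1, h2]
      ring
    rw [Finset.sum_congr rfl fun j _ => e1 j]
    rw [Finset.sum_comm]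
    refine Finset.sum_congr rfl fun d hd => ?_
    have hu : ∀ j : Fin 4, u (d - Finsupp.single j 2) = (uZ (sub2 j ⇑d) : ℝ) / 225 := by
      intro j
      have hcoe : ⇑(d - Finsupp.single j 2 : Fin 4 →₀ ℕ) = sub2 j ⇑d := by
        funext i
        rw [Finsupp.coe_tsub]
        simp only [Pi.sub_apply, sub2, Finsupp.single_apply]
      rw [u, hcoe]
    have step : ∀ j : Fin 4,
        ((d j : ℝ) * ((d j - 1 : ℕ) : ℝ) * u (d - Finsupp.single j 2)) * coeff d P
        = (d j : ℝ) * ((d j : ℝ) - 1) * (uZ (sub2 j ⇑d) : ℝ) / 225 * coeff d P := by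
      intro j
      rw [hu j]
      rw [hcast (d j)]
      ring
    rw [Finset.sum_congr rfl fun j _ => step j]
    rw [← Finset.sum_mul]
    rw [← Finset.sum_div, ← hm d hd]
    ring
  rw [← h3]
  exact h0

theorem sum_eval_intShell {ℓ : ℕ} (hl : ℓ = 10 ∨ ℓ = 4 ∨ ℓ = 2) (P : MvPolynomial (Fin 4) ℝ)
    (hP : P.IsHomogeneous ℓ) (hΔ : ∑ j : Fin 4, pderiv j (pderiv j P) = 0) :
    ∑ y ∈ intShell 4 2, eval (fun i => (y i : ℝ)) P = 0 := by
  have h : ∑ y ∈ intShell 4 2, eval (fun i => (y i : ℝ)) P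
      = ∑ d ∈ P.support, coeff d P * (mZ ⇑d : ℝ) := by
    simp_rw [eval_eq']
    rw [Finset.sum_comm]
    refine Finset.sum_congr rfl fun d _ => ?_
    rw [← Finset.mul_sum]
    congr 1
    rw [mZ]
    push_cast
    rfl
  rw [h]
  exact core hl P hP hΔ

/-- The normalization map. -/
noncomputable def phi (y : Fin 4 → ℤ) : EuclideanSpace ℝ (Fin 4) :=
  WithLp.toLp 2 (fun i => (y i : ℝ) / Real.sqrt 2)

theorem phi_inj : Function.Injective phi := by
  intro a b h
  funext i
  have h1 : (a i : ℝ) / Real.sqrt 2 = (b i : ℝ) / Real.sqrt 2 := congrArg (fun v : EuclideanSpace ℝ (Fin 4) => v i) h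
  have h2 : Real.sqrt 2 ≠ 0 := by positivity
  field_simp at h1
  exact_mod_cast h1

/-- The normalized shell as a `Finset`. -/
noncomputable def N : Finset (EuclideanSpace ℝ (Fin 4)) := (intShell 4 2).map ⟨phi, phi_inj⟩

theorem normShell_eq_N : normShell 4 2 = ↑N := by
  ext x
  simp only [normShell, Set.mem_setOf_eq, N, Finset.coe_map, Set.mem_image, Finset.mem_coe,
    Function.Embedding.coeFn_mk]
  constructor
  · rintro ⟨y, hy, hxy⟩
    refine ⟨y, hy, ?_⟩
    ext i
    rw [phi]
    rw [hxy i]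
    norm_num
  · rintro ⟨y, hy, rfl⟩
    refine ⟨y, hy, fun i => ?_⟩
    rw [phi]
    norm_num

theorem neg_mem_intShell {y : Fin 4 → ℤ} (hy : y ∈ intShell 4 2) : -y ∈ intShell 4 2 := by
  simp only [intShell, Finset.mem_filter, Finset.mem_Icc, Pi.le_def] at hy ⊢
  obtain ⟨⟨h1, h2⟩, h3⟩ := hy
  refine ⟨⟨fun i => ?_, fun i => ?_⟩, ?_⟩
  · have := h2 i; simp only [Pi.neg_apply]; omega
  · have := h1 i; simp only [Pi.neg_apply]; omega
  · rw [← h3]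
    exact Finset.sum_congr rfl fun i _ => by simp only [Pi.neg_apply]; ring

theorem neg_mem_N {x : EuclideanSpace ℝ (Fin 4)} (hx : x ∈ N) : -x ∈ N := by
  obtain ⟨y, hy, rfl⟩ := Finset.mem_map.mp hx
  refine Finset.mem_map.mpr ⟨-y, neg_mem_intShell hy, ?_⟩
  show phi (-y) = -(phi y)
  ext i
  show (((-y) i : ℤ) : ℝ) / Real.sqrt 2 = -((y i : ℝ) / Real.sqrt 2)
  simp only [Pi.neg_apply]
  push_cast
  ring

theorem card_N : N.card = 24 := by
  rw [N, Finset.card_map, intShell_eq]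
  decide

theorem eval_phi {ℓ : ℕ} (P : MvPolynomial (Fin 4) ℝ) (hP : P.IsHomogeneous ℓ)
    (y : Fin 4 → ℤ) :
    eval (fun i => phi y i) P = (Real.sqrt 2)⁻¹ ^ ℓ * eval (fun i => (y i : ℝ)) P := by
  rw [eval_eq', eval_eq', Finset.mul_sum]
  refine Finset.sum_congr rfl fun d hd => ?_
  have hdeg : ∑ i : Fin 4, d i = ℓ := mem_support_deg hP hd
  have h : ∏ i : Fin 4, ((y i : ℝ) / Real.sqrt 2) ^ d i
      = (∏ i : Fin 4, (y i : ℝ) ^ d i) * (Real.sqrt 2)⁻¹ ^ ℓ := by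
    rw [← hdeg, ← Finset.prod_pow_eq_pow_sum, ← Finset.prod_mul_distrib]
    exact Finset.prod_congr rfl fun i _ => by rw [div_eq_mul_inv, mul_pow]
  show coeff d P * ∏ i : Fin 4, ((y i : ℝ) / Real.sqrt 2) ^ d i = _
  rw [h]
  ring

theorem eval_neg {ℓ : ℕ} (P : MvPolynomial (Fin 4) ℝ) (hP : P.IsHomogeneous ℓ)
    (hev : Even ℓ) (x : EuclideanSpace ℝ (Fin 4)) :
    eval (fun i => (-x) i) P = eval (fun i => x i) P := by
  rw [eval_eq', eval_eq']
  refine Finset.sum_congr rfl fun d hd => ?_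
  have hdeg : ∑ i : Fin 4, d i = ℓ := mem_support_deg hP hd
  congr 1
  have h1 : ∀ i : Fin 4, ((-x) i) ^ d i = (-1 : ℝ) ^ d i * (x i) ^ d i := by
    intro i
    show (-(x i)) ^ d i = _
    rw [neg_pow]
  rw [Finset.prod_congr rfl fun i _ => h1 i, Finset.prod_mul_distrib,
    Finset.prod_pow_eq_pow_sum, hdeg, hev.neg_one_pow, one_mul]

end D4Design

open D4Design in
/-- Every half set of the normalized `D₄` root system is a spherical
`{10,4,2}`-design with 12 points on `S³`: if `X′ ⊆ (1/√2)(D₄)₂` contains exactly one of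
`x, −x` for every `x ∈ (1/√2)(D₄)₂`, then `|X′| = 12` and every harmonic polynomial of
degree `ℓ ∈ {10,4,2}` sums to zero over `X′`. -/
theorem half_set_of_D4_roots_is_design (X' : Finset (EuclideanSpace ℝ (Fin 4)))
    (hsub : (X' : Set (EuclideanSpace ℝ (Fin 4))) ⊆ normShell 4 2)
    (hhalf : ∀ x ∈ normShell 4 2, Xor' (x ∈ X') (-x ∈ X')) :
    X'.card = 12 ∧
      ∀ ℓ ∈ ({10, 4, 2} : Set ℕ), ∀ P : MvPolynomial (Fin 4) ℝ, IsHarmonic ℓ P →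
        ∑ x ∈ X', eval (fun i => x i) P = 0 := by
  classical
  have hNmem : ∀ x : EuclideanSpace ℝ (Fin 4), x ∈ N ↔ x ∈ normShell 4 2 := by
    intro x
    rw [normShell_eq_N, Finset.mem_coe]
  set M := X'.image (fun x => -x) with hM
  have hMcard : M.card = X'.card := Finset.card_image_of_injective _ neg_injective
  have hdisj : Disjoint X' M := by
    rw [Finset.disjoint_left]
    rintro x hx hxM
    obtain ⟨x', hx', hxx'⟩ := Finset.mem_image.mp hxM
    have hx'eq : x' = -x := by rw [← hxx', neg_neg]
    have hnx : -x ∈ X' := by rw [← hx'eq]; exact hx'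
    rcases hhalf x (hsub hx) with ⟨_, h⟩ | ⟨_, h⟩
    · exact h hnx
    · exact h hx
  have hunion : X' ∪ M = N := by
    ext x
    constructor
    · intro hx
      rcases Finset.mem_union.mp hx with h | h
      · exact (hNmem x).mpr (hsub h)
      · obtain ⟨x', hx', rfl⟩ := Finset.mem_image.mp h
        exact neg_mem_N ((hNmem x').mpr (hsub hx'))

    · intro hx
      rcases hhalf x ((hNmem x).mp hx) with ⟨h, _⟩ | ⟨h, _⟩
      · exact Finset.mem_union_left _ h
      · exact Finset.mem_union_right _ (Finset.mem_image.mpr ⟨-x, h, neg_neg x⟩)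
  have hcard : X'.card = 12 := by
    have hc := congrArg Finset.card hunion
    rw [Finset.card_union_of_disjoint hdisj, hMcard, card_N] at hc
    omega
  refine ⟨hcard, ?_⟩
  intro ℓ hℓ P hHarm
  obtain ⟨hhom, hlap⟩ := hHarm
  have hl : ℓ = 10 ∨ ℓ = 4 ∨ ℓ = 2 := by simpa using hℓ
  have heven : Even ℓ := by rcases hl with h | h | h <;> subst h <;> decide
  have hNsum : ∑ x ∈ N, eval (fun i => x i) P = 0 := by
    rw [N, Finset.sum_map]
    simp only [Function.Embedding.coeFn_mk]
    rw [Finset.sum_congr rfl fun y _ => eval_phi P hhom y, ← Finset.mul_sum,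
      sum_eval_intShell hl P hhom hlap, mul_zero]
  have hXsum : ∑ x ∈ N, eval (fun i => x i) P = 2 * ∑ x ∈ X', eval (fun i => x i) P := by
    rw [← hunion, Finset.sum_union hdisj, hM,
      Finset.sum_image (fun a _ b _ h => neg_injective h)]
    rw [Finset.sum_congr rfl fun x _ => eval_neg P hhom heven x]
    ring
  linarith
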